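/- In any simple graph G, n_G(P₄) = m - n⟨k²⟩ + (1/2)∑_{st∈E}(ξ(s)+ξ(t)) - ∑_{st∈E}|Γ(s)∩Γ(t)|, where ξ(v) = ∑_{u∈Γ(v)} k_u. -/

import Mathlib

open Finset BigOperators SimpleGraph

namespace CrossVar

variable {V : Type} [Fintype V] [DecidableEq V]

/-- Adjacency indicator `a_{xy}`. -/
def a (G : SimpleGraph V) [DecidableRel G.Adj] (x y : V) : ℚ := if G.Adj x y then 1 else 0

/-- Degree `k_v` as a rational number. -/
def deg (G : SimpleGraph V) [DecidableRel G.Adj] (v : V) : ℚ := (G.degree v : ℚ)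

/-- Sum over the set `Q` of unordered pairs `{st, uv}` of vertex-disjoint (independent) edges of
`G` of a function `f s t u v` (intended to be invariant under `s ↔ t`, `u ↔ v` and
`(s,t) ↔ (u,v)`).  Each unordered pair of independent edges corresponds to exactly `8` ordered
tuples `(s,t,u,v)`, whence the division by `8`. -/
def Qsum (G : SimpleGraph V) [DecidableRel G.Adj] (f : V → V → V → V → ℚ) : ℚ :=
  (∑ s, ∑ t, ∑ u, ∑ v,
    if G.Adj s t ∧ G.Adj u v ∧ s ≠ u ∧ s ≠ v ∧ t ≠ u ∧ t ≠ v then f s t u v else 0) / 8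

/-- Sum over the unordered edges `{s,t} ∈ E` of `f s t` (intended for symmetric `f`);
each unordered edge corresponds to two ordered adjacent pairs, whence the division by `2`. -/
def edgeSum (G : SimpleGraph V) [DecidableRel G.Adj] (f : V → V → ℚ) : ℚ :=
  (∑ s, ∑ t, if G.Adj s t then f s t else 0) / 2

/-- The number of subgraphs of `G` isomorphic to `F` (each unlabeled copy counted once). -/
noncomputable def copyCount {α : Type} (G : SimpleGraph V) (F : SimpleGraph α) : ℕ :=
  Nat.card {H : G.Subgraph // Nonempty (H.coe ≃g F)}

/-- `ξ(v)`: the sum of the degrees of the neighbours of `v`. -/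
def xi (G : SimpleGraph V) [DecidableRel G.Adj] (v : V) : ℚ :=
  ∑ u ∈ G.neighborFinset v, deg G u

/-- The paw graph: a triangle `{0,1,2}` with a pendant edge `{2,3}`. -/
def pawGraph : SimpleGraph (Fin 4) :=
  SimpleGraph.fromRel (fun x y => (x, y) ∈ [((0 : Fin 4), (1 : Fin 4)), (0, 2), (1, 2), (2, 3)])

/-- `C₃ ⊕ P₂`: the disjoint union of a triangle `{0,1,2}` and an edge `{3,4}`. -/
def triEdgeGraph : SimpleGraph (Fin 5) :=
  SimpleGraph.fromRel (fun x y => (x, y) ∈ [((0 : Fin 5), (1 : Fin 5)), (0, 2), (1, 2), (3, 4)])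


set_option linter.unusedSectionVars false
set_option maxHeartbeats 1000000

def P4sub (G : SimpleGraph V) (s t u v : V) : G.Subgraph where
  verts := {s, t, u, v}
  Adj x y := G.Adj x y ∧ ((x = s ∧ y = t) ∨ (x = t ∧ y = s) ∨ (x = t ∧ y = u) ∨ (x = u ∧ y = t)
      ∨ (x = u ∧ y = v) ∨ (x = v ∧ y = u))
  adj_sub h := h.1
  edge_vert := by rintro x y ⟨-, h⟩; simp only [Set.mem_insert_iff, Set.mem_singleton_iff]; tauto
  symm := ⟨by rintro x y ⟨ha, h⟩; exact ⟨ha.symm, by tauto⟩⟩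

lemma p4sub_rev (G : SimpleGraph V) (s t u v : V) :
    P4sub G v u t s = P4sub G s t u v := by
  apply SimpleGraph.Subgraph.ext
  · show ({v, u, t, s} : Set V) = {s, t, u, v}
    ext x; simp only [Set.mem_insert_iff, Set.mem_singleton_iff]; tauto
  · ext x y; simp only [P4sub]; tauto

lemma p4sub_inj (G : SimpleGraph V) {s t u v s' t' u' v' : V}
    (h1 : G.Adj s t) (h2 : G.Adj t u) (h3 : G.Adj u v)
    (hsu : s ≠ u) (hsv : s ≠ v) (htv : t ≠ v)
    (h1' : G.Adj s' t') (h2' : G.Adj t' u') (h3' : G.Adj u' v')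
    (hsu' : s' ≠ u') (hsv' : s' ≠ v') (htv' : t' ≠ v')
    (he : P4sub G s t u v = P4sub G s' t' u' v') :
    (s = s' ∧ t = t' ∧ u = u' ∧ v = v') ∨ (s = v' ∧ t = u' ∧ u = t' ∧ v = s') := by
  have hst := G.ne_of_adj h1
  have htu := G.ne_of_adj h2
  have huv := G.ne_of_adj h3
  have hst' := G.ne_of_adj h1'
  have htu' := G.ne_of_adj h2'
  have huv' := G.ne_of_adj h3'
  have hA : ∀ x y, (P4sub G s t u v).Adj x y ↔ (P4sub G s' t' u' v').Adj x y := by rw [he]; exact fun x y => Iff.rfl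
  simp only [P4sub] at hA
  have e1 := ((hA s t).mp ⟨h1, Or.inl ⟨rfl, rfl⟩⟩).2
  have e2 := ((hA t u).mp ⟨h2, Or.inr (Or.inr (Or.inl ⟨rfl, rfl⟩))⟩).2
  have e3 := ((hA u v).mp ⟨h3, Or.inr (Or.inr (Or.inr (Or.inr (Or.inl ⟨rfl, rfl⟩))))⟩).2
  have f1 := ((hA s' t').mpr ⟨h1', Or.inl ⟨rfl, rfl⟩⟩).2
  have f2 := ((hA t' u').mpr ⟨h2', Or.inr (Or.inr (Or.inl ⟨rfl, rfl⟩))⟩).2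
  have f3 := ((hA u' v').mpr ⟨h3', Or.inr (Or.inr (Or.inr (Or.inr (Or.inl ⟨rfl, rfl⟩))))⟩).2
  clear hA he e1 e2 e3
  rcases f2 with ⟨rfl, rfl⟩ | ⟨rfl, rfl⟩ | ⟨rfl, rfl⟩ | ⟨rfl, rfl⟩ | ⟨rfl, rfl⟩ | ⟨rfl, rfl⟩ <;>
    rcases f1 with ⟨rfl, h⟩ | ⟨rfl, h⟩ | ⟨rfl, h⟩ | ⟨rfl, h⟩ | ⟨rfl, h⟩ | ⟨rfl, h⟩ <;>
      rcases f3 with ⟨h', rfl⟩ | ⟨h', rfl⟩ | ⟨h', rfl⟩ | ⟨h', rfl⟩ | ⟨h', rfl⟩ | ⟨h', rfl⟩ <;>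
        tauto

def p4fun (G : SimpleGraph V) (s t u v : V) : Fin 4 → (P4sub G s t u v).verts := fun i =>
  ⟨![s, t, u, v] i, by fin_cases i <;> simp [P4sub]⟩

lemma p4sub_copy (G : SimpleGraph V) {s t u v : V} (h1 : G.Adj s t) (h2 : G.Adj t u)
    (h3 : G.Adj u v) (hsu : s ≠ u) (hsv : s ≠ v) (htv : t ≠ v) :
    Nonempty ((P4sub G s t u v).coe ≃g pathGraph 4) := by
  have hst := G.ne_of_adj h1
  have htu := G.ne_of_adj h2
  have huv := G.ne_of_adj h3
  have hfbij : Function.Bijective (p4fun G s t u v) := by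
    constructor
    · intro i j hij
      rw [Subtype.ext_iff] at hij
      fin_cases i <;> fin_cases j <;> simp_all [p4fun] <;> simp_all [eq_comm]
    · rintro ⟨x, hx⟩
      simp only [P4sub, Set.mem_insert_iff, Set.mem_singleton_iff] at hx
      rcases hx with rfl | rfl | rfl | rfl
      exacts [⟨0, rfl⟩, ⟨1, rfl⟩, ⟨2, rfl⟩, ⟨3, rfl⟩]
  refine ⟨(RelIso.mk (Equiv.ofBijective _ hfbij) ?_).symm⟩
  intro i j
  show (P4sub G s t u v).coe.Adj (p4fun G s t u v i) (p4fun G s t u v j) ↔ _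
  fin_cases i <;> fin_cases j <;>
    simp [p4fun, Subgraph.coe_adj, P4sub, pathGraph_adj,
      hst, htu, huv, hsu, hsv, htv, hst.symm, htu.symm, huv.symm, hsu.symm, hsv.symm, htv.symm,
      h1, h2, h3, h1.symm, h2.symm, h3.symm, G.irrefl] <;> decide

lemma pg01 : (pathGraph 4).Adj 0 1 := pathGraph_adj.mpr (Or.inl rfl)
lemma pg12 : (pathGraph 4).Adj 1 2 := pathGraph_adj.mpr (Or.inl rfl)
lemma pg23 : (pathGraph 4).Adj 2 3 := pathGraph_adj.mpr (Or.inl rfl)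

lemma copy_eq_p4sub (G : SimpleGraph V) (H : G.Subgraph) (e : H.coe ≃g pathGraph 4) :
    H = P4sub G (e.symm 0) (e.symm 1) (e.symm 2) (e.symm 3) ∧
      G.Adj (e.symm 0) (e.symm 1) ∧ G.Adj (e.symm 1) (e.symm 2) ∧ G.Adj (e.symm 2) (e.symm 3) ∧
      (e.symm 0 : V) ≠ e.symm 2 ∧ (e.symm 0 : V) ≠ e.symm 3 ∧ (e.symm 1 : V) ≠ e.symm 3 := by
  set w : Fin 4 → V := fun i => (e.symm i : V) with hw
  have hwinj : Function.Injective w := fun i j hij => by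
    apply e.symm.injective; exact Subtype.ext hij
  have hadj : ∀ i j : Fin 4, (pathGraph 4).Adj i j → H.Adj (w i) (w j) := by
    intro i j hij
    exact e.symm.map_rel_iff.mpr hij
  have hGadj : ∀ i j : Fin 4, (pathGraph 4).Adj i j → G.Adj (w i) (w j) :=
    fun i j hij => H.adj_sub (hadj i j hij)
  refine ⟨?_, hGadj 0 1 pg01, hGadj 1 2 pg12, hGadj 2 3 pg23,
    fun h => by simpa using hwinj h, fun h => by simpa using hwinj h,
    fun h => by simpa using hwinj h⟩
  have hwv : ∀ i : Fin 4, w i ∈ H.verts := fun i => Subtype.coe_prop _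
  apply SimpleGraph.Subgraph.ext
  · ext x
    simp only [P4sub, Set.mem_insert_iff, Set.mem_singleton_iff]
    constructor
    · intro hx
      have key : ∀ i : Fin 4, w i = x → (x = w 0 ∨ x = w 1 ∨ x = w 2 ∨ x = w 3) := by
        intro i hi; fin_cases i <;> subst hi <;> tauto
      exact key (e ⟨x, hx⟩) (by simp [hw])
    · rintro (rfl | rfl | rfl | rfl) <;> exact hwv _
  · ext x y
    show H.Adj x y ↔ (P4sub G (w 0) (w 1) (w 2) (w 3)).Adj x y
    simp only [P4sub]
    constructor
    · intro hxy
      have hx := H.edge_vert hxy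
      have hy := H.edge_vert (hxy.symm)
      refine ⟨H.adj_sub hxy, ?_⟩
      have key : ∀ i j : Fin 4, w i = x → w j = y → (pathGraph 4).Adj i j →
          ((x = w 0 ∧ y = w 1) ∨ (x = w 1 ∧ y = w 0) ∨ (x = w 1 ∧ y = w 2) ∨ (x = w 2 ∧ y = w 1)
            ∨ (x = w 2 ∧ y = w 3) ∨ (x = w 3 ∧ y = w 2)) := by
        intro i j hix hjy hp
        rw [pathGraph_adj] at hp
        fin_cases i <;> fin_cases j <;> subst hix <;> subst hjy <;>
          first
          | exact absurd hp (by decide)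
          | tauto
      have hp : (pathGraph 4).Adj (e ⟨x, hx⟩) (e ⟨y, hy⟩) := e.map_rel_iff.mpr hxy
      exact key _ _ (by simp [hw]) (by simp [hw]) hp
    · rintro ⟨-, h⟩
      rcases h with ⟨rfl, rfl⟩ | ⟨rfl, rfl⟩ | ⟨rfl, rfl⟩ | ⟨rfl, rfl⟩ | ⟨rfl, rfl⟩ | ⟨rfl, rfl⟩
      exacts [hadj 0 1 pg01, (hadj 0 1 pg01).symm, hadj 1 2 pg12,
        (hadj 1 2 pg12).symm, hadj 2 3 pg23, (hadj 2 3 pg23).symm]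

def IsPathTuple (G : SimpleGraph V) (p : V × V × V × V) : Prop :=
  G.Adj p.1 p.2.1 ∧ G.Adj p.2.1 p.2.2.1 ∧ G.Adj p.2.2.1 p.2.2.2 ∧
    p.1 ≠ p.2.2.1 ∧ p.1 ≠ p.2.2.2 ∧ p.2.1 ≠ p.2.2.2

instance (G : SimpleGraph V) [DecidableRel G.Adj] : DecidablePred (IsPathTuple G) := by
  intro p; unfold IsPathTuple; infer_instance

def tsub (G : SimpleGraph V) (p : V × V × V × V) : G.Subgraph :=
  P4sub G p.1 p.2.1 p.2.2.1 p.2.2.2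

def trev (p : V × V × V × V) : V × V × V × V := (p.2.2.2, p.2.2.1, p.2.1, p.1)


/-- restatement of p4sub_copy / copy_eq / inj in tuple form -/
lemma tsub_copy (G : SimpleGraph V) {p : V × V × V × V} (hp : IsPathTuple G p) :
    Nonempty ((tsub G p).coe ≃g pathGraph 4) := by
  obtain ⟨h1, h2, h3, h4, h5, h6⟩ := hp
  exact p4sub_copy G h1 h2 h3 h4 h5 h6

lemma trev_pathTuple (G : SimpleGraph V) {p : V × V × V × V} (hp : IsPathTuple G p) :
    IsPathTuple G (trev p) := by
  obtain ⟨h1, h2, h3, h4, h5, h6⟩ := hp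
  exact ⟨h3.symm, h2.symm, h1.symm, h6.symm, h5.symm, h4.symm⟩

lemma tsub_trev (G : SimpleGraph V) (p : V × V × V × V) : tsub G (trev p) = tsub G p :=
  p4sub_rev G _ _ _ _

lemma tsub_inj (G : SimpleGraph V) {p q : V × V × V × V} (hp : IsPathTuple G p)
    (hq : IsPathTuple G q) (he : tsub G p = tsub G q) : p = q ∨ p = trev q := by
  obtain ⟨h1, h2, h3, h4, h5, h6⟩ := hp
  obtain ⟨h1', h2', h3', h4', h5', h6'⟩ := hq
  rcases p4sub_inj G h1 h2 h3 h4 h5 h6 h1' h2' h3' h4' h5' h6' he with ⟨e1,e2,e3,e4⟩ | ⟨e1,e2,e3,e4⟩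
  · left
    obtain ⟨a,b,c,d⟩ := p; obtain ⟨a',b',c',d'⟩ := q
    simp_all
  · right
    obtain ⟨a,b,c,d⟩ := p; obtain ⟨a',b',c',d'⟩ := q
    simp_all [trev]


noncomputable def ctup (G : SimpleGraph V) (H : G.Subgraph)
    (h : Nonempty (H.coe ≃g pathGraph 4)) : V × V × V × V :=
  ((Classical.choice h).symm 0, (Classical.choice h).symm 1,
    (Classical.choice h).symm 2, (Classical.choice h).symm 3)

lemma ctup_spec (G : SimpleGraph V) (H : G.Subgraph) (h : Nonempty (H.coe ≃g pathGraph 4)) :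
    IsPathTuple G (ctup G H h) ∧ H = tsub G (ctup G H h) := by
  obtain ⟨hH, a1, a2, a3, a4, a5, a6⟩ := copy_eq_p4sub G H (Classical.choice h)
  exact ⟨⟨a1, a2, a3, a4, a5, a6⟩, hH⟩

instance fintypeSubgraph (G : SimpleGraph V) : Finite G.Subgraph := by
  have : Function.Injective (fun H : G.Subgraph => (H.verts, H.Adj)) := by
    intro H1 H2 h
    simp only [Prod.mk.injEq] at h
    exact SimpleGraph.Subgraph.ext h.1 h.2
  exact Finite.of_injective _ this

theorem pathTuples_card (G : SimpleGraph V) [DecidableRel G.Adj] :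
    (univ.filter (IsPathTuple G)).card
      = 2 * Nat.card {H : G.Subgraph // Nonempty (H.coe ≃g pathGraph 4)} := by
  classical
  letI : Fintype G.Subgraph := Fintype.ofFinite _
  set s : Finset (V × V × V × V) := univ.filter (IsPathTuple G) with hs
  set t : Finset G.Subgraph :=
    univ.filter (fun H : G.Subgraph => Nonempty (H.coe ≃g pathGraph 4)) with ht
  have hmap : ∀ p ∈ s, tsub G p ∈ t := by
    intro p hp
    rw [hs, mem_filter] at hp
    rw [ht, mem_filter]
    exact ⟨mem_univ _, tsub_copy G hp.2⟩
  rw [Finset.card_eq_sum_card_fiberwise hmap]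
  have hfib : ∀ H ∈ t, (s.filter fun p => tsub G p = H).card = 2 := by
    intro H hH
    rw [ht, mem_filter] at hH
    obtain ⟨-, h⟩ := hH
    obtain ⟨hq, hHeq⟩ := ctup_spec G H h
    set q := ctup G H h with hqdef
    have hset : (s.filter fun p => tsub G p = H) = {q, trev q} := by
      ext p
      rw [mem_filter, hs, mem_filter, mem_insert, mem_singleton]
      constructor
      · rintro ⟨⟨-, hp⟩, hpH⟩
        exact tsub_inj G hp hq (hpH.trans hHeq)
      · rintro (rfl | rfl)
        · exact ⟨⟨mem_univ _, hq⟩, hHeq.symm⟩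
        · exact ⟨⟨mem_univ _, trev_pathTuple G hq⟩, (tsub_trev G q).trans hHeq.symm⟩
    rw [hset, card_insert_of_notMem, card_singleton]
    rw [mem_singleton]
    intro hcon
    have : q.1 = q.2.2.2 := by
      conv_lhs => rw [hcon]
      rfl
    exact hq.2.2.2.2.1 this
  rw [Finset.sum_congr rfl hfib, Finset.sum_const, smul_eq_mul, mul_comm]
  congr 1
  rw [Nat.card_eq_fintype_card, Fintype.card_subtype]

lemma sum_adj (G : SimpleGraph V) [DecidableRel G.Adj] (t : V) (f : V → ℚ) :
    ∑ u, (if G.Adj t u then f u else 0) = ∑ u ∈ G.neighborFinset t, f u := by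
  rw [← Finset.sum_filter]
  congr 1
  ext u
  simp [mem_neighborFinset]

lemma sum_adj_const (G : SimpleGraph V) [DecidableRel G.Adj] (t : V) (c : ℚ) :
    ∑ u, (if G.Adj t u then c else 0) = deg G t * c := by
  rw [sum_adj, Finset.sum_const, card_neighborFinset_eq_degree, deg, nsmul_eq_mul]

lemma inner_count (G : SimpleGraph V) [DecidableRel G.Adj] {t u : V} (h : G.Adj t u) :
    ∑ s, ∑ v, (if IsPathTuple G (s, t, u, v) then (1 : ℚ) else 0)
      = (deg G t - 1) * (deg G u - 1)
        - ((G.neighborFinset t ∩ G.neighborFinset u).card : ℚ) := by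
  have hiff : ∀ s v : V, IsPathTuple G (s, t, u, v) ↔
      (s ∈ (G.neighborFinset t).erase u ∧ (v ∈ (G.neighborFinset u).erase t ∧ s ≠ v)) := by
    intro s v
    unfold IsPathTuple
    simp only [mem_erase, mem_neighborFinset]
    constructor
    · rintro ⟨a1, -, a3, a4, a5, a6⟩
      exact ⟨⟨a4, a1.symm⟩, ⟨fun hv => a6 hv.symm, a3⟩, a5⟩
    · rintro ⟨⟨b1, b2⟩, ⟨b3, b4⟩, b5⟩
      exact ⟨b2.symm, h, b4, b1, b5, fun hv => b3 hv.symm⟩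
  have step1 : ∑ s, ∑ v, (if IsPathTuple G (s, t, u, v) then (1 : ℚ) else 0)
      = ∑ s ∈ (G.neighborFinset t).erase u, ∑ v ∈ (G.neighborFinset u).erase t,
          (if s ≠ v then (1 : ℚ) else 0) := by
    simp only [hiff, ite_and]
    have hinner : ∀ s, ∑ v, (if s ∈ (G.neighborFinset t).erase u then
        (if v ∈ (G.neighborFinset u).erase t then (if s ≠ v then (1 : ℚ) else 0) else 0) else 0)
        = if s ∈ (G.neighborFinset t).erase u then
            (∑ v ∈ (G.neighborFinset u).erase t, if s ≠ v then (1 : ℚ) else 0) else 0 := by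
      intro s
      by_cases hs : s ∈ (G.neighborFinset t).erase u
      · simp only [if_pos hs]
        rw [Finset.sum_ite_mem, univ_inter]
      · simp [hs]
    rw [Finset.sum_congr rfl fun s _ => hinner s, Finset.sum_ite_mem, univ_inter]
  rw [step1]
  have step2 : ∀ s, ∑ v ∈ (G.neighborFinset u).erase t, (if s ≠ v then (1 : ℚ) else 0)
      = ((G.neighborFinset u).erase t).card
        - (if s ∈ (G.neighborFinset u).erase t then (1 : ℚ) else 0) := by
    intro s
    have : ∀ v, (if s ≠ v then (1 : ℚ) else 0) = 1 - (if s = v then (1 : ℚ) else 0) := by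
      intro v; by_cases hv : s = v <;> simp [hv]
    rw [Finset.sum_congr rfl fun v _ => this v, Finset.sum_sub_distrib, Finset.sum_const,
      Finset.sum_ite_eq, nsmul_eq_mul, mul_one]
  rw [Finset.sum_congr rfl fun s _ => step2 s, Finset.sum_sub_distrib, Finset.sum_const,
    nsmul_eq_mul]
  have hcd : (((G.neighborFinset t).erase u).card : ℚ) = deg G t - 1 := by
    rw [Finset.card_erase_of_mem (by rwa [mem_neighborFinset]), card_neighborFinset_eq_degree]
    have : 1 ≤ G.degree t := by
      rw [← card_neighborFinset_eq_degree]
      exact Finset.card_pos.mpr ⟨u, by rwa [mem_neighborFinset]⟩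
    rw [Nat.cast_sub this, deg, Nat.cast_one]
  have hcd' : (((G.neighborFinset u).erase t).card : ℚ) = deg G u - 1 := by
    rw [Finset.card_erase_of_mem (by rw [mem_neighborFinset]; exact h.symm),
      card_neighborFinset_eq_degree]
    have : 1 ≤ G.degree u := by
      rw [← card_neighborFinset_eq_degree]
      exact Finset.card_pos.mpr ⟨t, by rw [mem_neighborFinset]; exact h.symm⟩
    rw [Nat.cast_sub this, deg, Nat.cast_one]
  have hint : (G.neighborFinset t).erase u ∩ (G.neighborFinset u).erase t
      = G.neighborFinset t ∩ G.neighborFinset u := by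
    ext x
    simp only [mem_inter, mem_erase, mem_neighborFinset]
    constructor
    · rintro ⟨⟨-, h1⟩, -, h2⟩; exact ⟨h1, h2⟩
    · rintro ⟨h1, h2⟩
      exact ⟨⟨fun hx => G.irrefl (hx ▸ h2), h1⟩, fun hx => G.irrefl (hx ▸ h1), h2⟩
  rw [Finset.sum_ite_mem, hint, Finset.sum_const, nsmul_eq_mul, mul_one, hcd, hcd']

lemma sum_deg (G : SimpleGraph V) [DecidableRel G.Adj] :
    ∑ v, deg G v = 2 * (G.edgeFinset.card : ℚ) := by
  unfold deg
  rw [← Nat.cast_sum]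
  rw [SimpleGraph.sum_degrees_eq_twice_card_edges]
  push_cast
  ring

lemma sum_adj' (G : SimpleGraph V) [DecidableRel G.Adj] (u : V) (f : V → ℚ) :
    ∑ t, (if G.Adj t u then f t else 0) = ∑ t ∈ G.neighborFinset u, f t := by
  rw [← sum_adj G u f]
  exact Finset.sum_congr rfl fun t _ => if_congr (G.adj_comm t u) rfl rfl

lemma sum_xi (G : SimpleGraph V) [DecidableRel G.Adj] :
    ∑ t, xi G t = ∑ v, (deg G v) ^ 2 := by
  have : ∀ t, xi G t = ∑ u, (if G.Adj t u then deg G u else 0) := fun t => (sum_adj G t _).symm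
  rw [Finset.sum_congr rfl fun t _ => this t, Finset.sum_comm]
  refine Finset.sum_congr rfl fun u _ => ?_
  rw [sum_adj' G u (fun _ => deg G u), Finset.sum_const, card_neighborFinset_eq_degree,
    nsmul_eq_mul, sq, deg]

lemma double_adj_sum (G : SimpleGraph V) [DecidableRel G.Adj] (f : V → ℚ) :
    ∑ s, ∑ t, (if G.Adj s t then f s else 0) = ∑ s, deg G s * f s :=
  Finset.sum_congr rfl fun s _ => sum_adj_const G s (f s)

lemma double_adj_sum' (G : SimpleGraph V) [DecidableRel G.Adj] (f : V → ℚ) :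
    ∑ s, ∑ t, (if G.Adj s t then f t else 0) = ∑ t, deg G t * f t := by
  rw [Finset.sum_comm]
  refine Finset.sum_congr rfl fun t _ => ?_
  rw [← sum_adj_const G t (f t)]
  exact Finset.sum_congr rfl fun s _ => if_congr (G.adj_comm s t) rfl rfl

lemma edgeSum_xi (G : SimpleGraph V) [DecidableRel G.Adj] :
    edgeSum G (fun s t => xi G s + xi G t) = ∑ v, deg G v * xi G v := by
  unfold edgeSum
  have : ∀ s t : V, (if G.Adj s t then xi G s + xi G t else 0)
      = (if G.Adj s t then xi G s else 0) + (if G.Adj s t then xi G t else 0) := by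
    intro s t; by_cases h : G.Adj s t <;> simp [h]
  rw [Finset.sum_congr rfl fun s _ => Finset.sum_congr rfl fun t _ => this s t]
  rw [Finset.sum_congr rfl fun s _ => Finset.sum_add_distrib, Finset.sum_add_distrib,
    double_adj_sum G (fun s => xi G s), double_adj_sum' G (fun t => xi G t)]
  ring



theorem stmt15 (G : SimpleGraph V) [DecidableRel G.Adj] :
    (copyCount G (pathGraph 4) : ℚ) =
      (G.edgeFinset.card : ℚ) - (∑ v, (deg G v) ^ 2)
        + (1 / 2) * edgeSum G (fun s t => xi G s + xi G t)
        - edgeSum G (fun s t => ((G.neighborFinset s ∩ G.neighborFinset t).card : ℚ)) := by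
  have hcount : (2 : ℚ) * (copyCount G (pathGraph 4) : ℚ)
      = ((univ.filter (IsPathTuple G)).card : ℚ) := by
    rw [pathTuples_card G]
    push_cast [copyCount]
    ring
  have hcard : ((univ.filter (IsPathTuple G)).card : ℚ)
      = ∑ t, ∑ u, (if G.Adj t u then ((deg G t - 1) * (deg G u - 1)
          - ((G.neighborFinset t ∩ G.neighborFinset u).card : ℚ)) else 0) := by
    rw [← Finset.sum_boole]
    rw [Fintype.sum_prod_type]
    rw [Finset.sum_congr rfl fun s (_ : s ∈ univ) => Fintype.sum_prod_type
      (f := fun p : V × V × V => if IsPathTuple G (s, p) then (1:ℚ) else 0)]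
    rw [Finset.sum_congr rfl fun s (_ : s ∈ univ) => Finset.sum_congr rfl
      fun t (_ : t ∈ univ) => Fintype.sum_prod_type
      (f := fun p : V × V => if IsPathTuple G (s, t, p) then (1:ℚ) else 0)]
    -- now ∑ s, ∑ t, ∑ u, ∑ v; move s inside twice
    rw [Finset.sum_comm]
    rw [Finset.sum_congr rfl fun t (_ : t ∈ univ) => Finset.sum_comm]
    refine Finset.sum_congr rfl fun t _ => Finset.sum_congr rfl fun u _ => ?_
    by_cases h : G.Adj t u
    · rw [if_pos h, ← inner_count G h]
    · rw [if_neg h]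
      refine Finset.sum_eq_zero fun s _ => Finset.sum_eq_zero fun v _ => ?_
      rw [if_neg]
      rintro ⟨-, hadj, -⟩
      exact h hadj
  have hexp : ∀ t u : V, (if G.Adj t u then ((deg G t - 1) * (deg G u - 1)
          - ((G.neighborFinset t ∩ G.neighborFinset u).card : ℚ)) else 0)
      = (if G.Adj t u then deg G t * deg G u else 0) - (if G.Adj t u then deg G t else 0)
        - (if G.Adj t u then deg G u else 0) + (if G.Adj t u then (1:ℚ) else 0)
        - (if G.Adj t u then ((G.neighborFinset t ∩ G.neighborFinset u).card : ℚ) else 0) := by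
    intro t u; by_cases h : G.Adj t u <;> simp [h] <;> ring
  have hA1 : ∑ t, ∑ u, (if G.Adj t u then deg G t * deg G u else 0)
      = ∑ t, deg G t * xi G t := by
    refine Finset.sum_congr rfl fun t _ => ?_
    rw [sum_adj G t (fun u => deg G t * deg G u), ← Finset.mul_sum, xi]
  have hA2 : ∑ t, ∑ u, (if G.Adj t u then deg G t else 0) = ∑ v, (deg G v) ^ 2 := by
    rw [double_adj_sum G (fun t => deg G t)]
    exact Finset.sum_congr rfl fun v _ => (sq (deg G v)).symm
  have hA3 : ∑ t, ∑ u, (if G.Adj t u then deg G u else 0) = ∑ v, (deg G v) ^ 2 := by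
    rw [double_adj_sum' G (fun u => deg G u)]
    exact Finset.sum_congr rfl fun v _ => (sq (deg G v)).symm
  have hA4 : ∑ t, ∑ u, (if G.Adj t u then (1:ℚ) else 0) = 2 * (G.edgeFinset.card : ℚ) := by
    rw [Finset.sum_congr rfl fun t (_ : t ∈ univ) => sum_adj_const G t 1, ← sum_deg]
    exact Finset.sum_congr rfl fun v _ => mul_one _
  have hE2 : edgeSum G (fun s t => ((G.neighborFinset s ∩ G.neighborFinset t).card : ℚ))
      = (∑ t, ∑ u, (if G.Adj t u then ((G.neighborFinset t ∩ G.neighborFinset u).card : ℚ)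
          else 0)) / 2 := rfl
  have hkey : (2 : ℚ) * (copyCount G (pathGraph 4) : ℚ)
      = ∑ t, deg G t * xi G t - ∑ v, (deg G v) ^ 2 - ∑ v, (deg G v) ^ 2
        + 2 * (G.edgeFinset.card : ℚ)
        - ∑ t, ∑ u, (if G.Adj t u then
            ((G.neighborFinset t ∩ G.neighborFinset u).card : ℚ) else 0) := by
    rw [hcount, hcard, Finset.sum_congr rfl fun t (_ : t ∈ univ) =>
      Finset.sum_congr rfl fun u (_ : u ∈ univ) => hexp t u]
    simp only [Finset.sum_add_distrib, Finset.sum_sub_distrib]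
    rw [hA1, hA2, hA3, hA4]
  rw [edgeSum_xi, hE2]
  linarith [hkey]


end CrossVar
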